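/- Let $\psi$ be a random vector with $\mathbb{E}[\psi] = 0$ and finite variance $G = \mathrm{var}(\psi)/n$ (scaled), let $S$ be a random vector with $\mathbb{E}[S]=0$ and $\mathrm{var}(S)/N = U^{-1}$ for an invertible symmetric matrix $U$, and suppose $\mathbb{E}[\psi S^T] = nH$ for an invertible matrix $H$. Then $\frac{1}{N} U \preceq \frac{1}{n} H^{-1} G H^{-T}$, where $A \preceq B$ means $B - A$ is positive semi-definite. -/

import Mathlib

open MeasureTheory Matrix

lemma vc_integrable_bilinear {Ω : Type*} [MeasurableSpace Ω] (μ : Measure Ω)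
    {k : ℕ} (f g : Ω → Fin k → ℝ) (a c : Fin k → ℝ)
    (hint : ∀ i j, Integrable (fun ω => f ω i * g ω j) μ) :
    Integrable (fun ω => (∑ i, a i * f ω i) * (∑ j, c j * g ω j)) μ := by
  have h : ∀ ω, (∑ i, a i * f ω i) * (∑ j, c j * g ω j)
      = ∑ i, ∑ j, a i * c j * (f ω i * g ω j) := by
    intro ω
    rw [Finset.sum_mul_sum]
    refine Finset.sum_congr rfl fun i _ => Finset.sum_congr rfl fun j _ => by ring
  simp_rw [h]
  exact integrable_finset_sum _ fun i _ =>
    integrable_finset_sum _ fun j _ => (hint i j).const_mul _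

lemma vc_integral_bilinear {Ω : Type*} [MeasurableSpace Ω] (μ : Measure Ω)
    {k : ℕ} (f g : Ω → Fin k → ℝ) (a c : Fin k → ℝ)
    (hint : ∀ i j, Integrable (fun ω => f ω i * g ω j) μ) :
    ∫ ω, (∑ i, a i * f ω i) * (∑ j, c j * g ω j) ∂μ
      = ∑ i, ∑ j, a i * c j * ∫ ω, f ω i * g ω j ∂μ := by
  have h : ∀ ω, (∑ i, a i * f ω i) * (∑ j, c j * g ω j)
      = ∑ i, ∑ j, a i * c j * (f ω i * g ω j) := by
    intro ω
    rw [Finset.sum_mul_sum]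
    refine Finset.sum_congr rfl fun i _ => Finset.sum_congr rfl fun j _ => by ring
  simp_rw [h]
  rw [integral_finset_sum _ (fun i _ => integrable_finset_sum _
      (fun j _ => (hint i j).const_mul _))]
  refine Finset.sum_congr rfl fun i _ => ?_
  rw [integral_finset_sum _ (fun j _ => (hint i j).const_mul _)]
  exact Finset.sum_congr rfl fun j _ => integral_const_mul _ _


/-- Abstract variance-comparison lemma: if `ψ` and `S` are mean-zero random vectors
with `var(ψ) = n G`, `var(S) = N U⁻¹` and cross-moment `E[ψ Sᵀ] = n H`, where `U` is
symmetric invertible and `H` is invertible, then `(1/N) U ⪯ (1/n) H⁻¹ G H⁻ᵀ` in the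
Loewner (positive semi-definite) order. -/
theorem variance_comparison
    {Ω : Type*} [MeasurableSpace Ω] (μ : Measure Ω) [IsProbabilityMeasure μ]
    (k : ℕ) (ψ S : Ω → Fin k → ℝ) (n N : ℝ) (hn : 0 < n) (hN : 0 < N)
    (G H U : Matrix (Fin k) (Fin k) ℝ)
    (hGsymm : G.IsSymm) (hUsymm : U.IsSymm)
    (hU : IsUnit U.det) (hH : IsUnit H.det)
    (hmeanψ : ∀ i, ∫ ω, ψ ω i ∂μ = 0)
    (hmeanS : ∀ i, ∫ ω, S ω i ∂μ = 0)
    (hintψψ : ∀ i j, Integrable (fun ω => ψ ω i * ψ ω j) μ)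
    (hintSS : ∀ i j, Integrable (fun ω => S ω i * S ω j) μ)
    (hintψS : ∀ i j, Integrable (fun ω => ψ ω i * S ω j) μ)
    (hG : ∀ i j, ∫ ω, ψ ω i * ψ ω j ∂μ = n * G i j)
    (hUinv : ∀ i j, ∫ ω, S ω i * S ω j ∂μ = N * U⁻¹ i j)
    (hcross : ∀ i j, ∫ ω, ψ ω i * S ω j ∂μ = n * H i j) :
    ((1 / n) • (H⁻¹ * G * (H⁻¹)ᵀ) - (1 / N) • U).PosSemidef := by
  rw [posSemidef_iff_dotProduct_mulVec]
  constructor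
  · -- Hermitian part
    rw [Matrix.IsHermitian, conjTranspose_eq_transpose_of_trivial]
    simp only [transpose_sub, transpose_smul, transpose_mul, transpose_transpose,
      hGsymm.eq, hUsymm.eq, Matrix.mul_assoc]
  · intro x
    -- set up vectors
    set a : Fin k → ℝ := (H⁻¹)ᵀ *ᵥ x with ha
    set c : Fin k → ℝ := U *ᵥ x with hc
    set A : Ω → ℝ := fun ω => ∑ i, a i * ψ ω i with hA
    set B : Ω → ℝ := fun ω => ∑ i, c i * S ω i with hB
    have hAA : Integrable (fun ω => A ω * A ω) μ :=
      vc_integrable_bilinear μ ψ ψ a a hintψψ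
    have hAB : Integrable (fun ω => A ω * B ω) μ :=
      vc_integrable_bilinear μ ψ S a c hintψS
    have hBB : Integrable (fun ω => B ω * B ω) μ :=
      vc_integrable_bilinear μ S S c c hintSS
    have key : (0:ℝ) ≤ ∫ ω, ((1/n) * A ω - (1/N) * B ω)^2 ∂μ :=
      integral_nonneg fun ω => sq_nonneg _
    have expand : ∫ ω, ((1/n) * A ω - (1/N) * B ω)^2 ∂μ
        = (1/n)^2 * ∫ ω, A ω * A ω ∂μ
          - (2*(1/n)*(1/N)) * ∫ ω, A ω * B ω ∂μ
          + (1/N)^2 * ∫ ω, B ω * B ω ∂μ := by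
      have h : ∀ ω, ((1/n) * A ω - (1/N) * B ω)^2
          = (1/n)^2 * (A ω * A ω) - (2*(1/n)*(1/N)) * (A ω * B ω)
            + (1/N)^2 * (B ω * B ω) := by intro ω; ring
      simp_rw [h]
      have h1 : Integrable (fun ω => (1/n)^2 * (A ω * A ω)
          - (2*(1/n)*(1/N)) * (A ω * B ω)) μ :=
        (hAA.const_mul _).sub (hAB.const_mul _)
      have h2 : Integrable (fun ω => (1/N)^2 * (B ω * B ω)) μ := hBB.const_mul _
      rw [integral_add h1 h2,
        integral_sub (hAA.const_mul _) (hAB.const_mul _),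
        integral_const_mul, integral_const_mul, integral_const_mul]
    -- evaluate the three integrals
    have IAA : ∫ ω, A ω * A ω ∂μ = n * (a ⬝ᵥ G *ᵥ a) := by
      rw [hA]
      rw [vc_integral_bilinear μ ψ ψ a a hintψψ]
      simp_rw [hG, dotProduct, mulVec, dotProduct, Finset.mul_sum]
      refine Finset.sum_congr rfl fun i _ => Finset.sum_congr rfl fun j _ => by ring
    have IAB : ∫ ω, A ω * B ω ∂μ = n * (a ⬝ᵥ H *ᵥ c) := by
      rw [hA, hB]
      rw [vc_integral_bilinear μ ψ S a c hintψS]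
      simp_rw [hcross, dotProduct, mulVec, dotProduct, Finset.mul_sum]
      refine Finset.sum_congr rfl fun i _ => Finset.sum_congr rfl fun j _ => by ring
    have IBB : ∫ ω, B ω * B ω ∂μ = N * (c ⬝ᵥ U⁻¹ *ᵥ c) := by
      rw [hB]
      rw [vc_integral_bilinear μ S S c c hintSS]
      simp_rw [hUinv, dotProduct, mulVec, dotProduct, Finset.mul_sum]
      refine Finset.sum_congr rfl fun i _ => Finset.sum_congr rfl fun j _ => by ring
    -- matrix identities
    have id1 : a ⬝ᵥ G *ᵥ a = x ⬝ᵥ (H⁻¹ * G * (H⁻¹)ᵀ) *ᵥ x := by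
      rw [ha, ← mulVec_mulVec, ← mulVec_mulVec, dotProduct_mulVec x,
        ← mulVec_transpose, dotProduct_mulVec a, ← mulVec_transpose]
    have id2 : a ⬝ᵥ H *ᵥ c = x ⬝ᵥ U *ᵥ x := by
      rw [ha, hc, dotProduct_mulVec, ← mulVec_transpose, mulVec_mulVec,
        ← transpose_mul, Matrix.nonsing_inv_mul H hH, transpose_one, one_mulVec]
    have id3 : c ⬝ᵥ U⁻¹ *ᵥ c = x ⬝ᵥ U *ᵥ x := by
      rw [hc, mulVec_mulVec, Matrix.nonsing_inv_mul U hU, one_mulVec,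
        dotProduct_comm]
    rw [expand, IAA, IAB, IBB, id1, id2, id3] at key
    -- final arithmetic
    have hx : star x = x := rfl
    rw [hx, sub_mulVec, smul_mulVec, smul_mulVec, dotProduct_sub,
      dotProduct_smul, dotProduct_smul]
    have harith : (1/n)^2 * (n * (x ⬝ᵥ (H⁻¹ * G * (H⁻¹)ᵀ) *ᵥ x))
        - (2*(1/n)*(1/N)) * (n * (x ⬝ᵥ U *ᵥ x)) + (1/N)^2 * (N * (x ⬝ᵥ U *ᵥ x))
        = (1/n) * (x ⬝ᵥ (H⁻¹ * G * (H⁻¹)ᵀ) *ᵥ x) - (1/N) * (x ⬝ᵥ U *ᵥ x) := by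
      field_simp
      ring
    rw [harith] at key
    simpa using key
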